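/- Let f : H → ℝ be Gâteaux differentiable on a real Hilbert space H, and suppose that ∇f is monotone and positively homogeneous. Then f(x) = (1/2)⟨x, ∇f(x)⟩ + f(0) for every x ∈ H. -/

import Mathlib

open RealInnerProductSpace Pointwise

variable {H : Type*} [NormedAddCommGroup H] [InnerProductSpace ℝ H] [CompleteSpace H]

/-- `P` is the metric projection (nearest-point map) onto `C`. -/
def IsProjOn (C : Set H) (P : H → H) : Prop :=
  ∀ x, P x ∈ C ∧ ∀ y ∈ C, ‖x - P x‖ ≤ ‖x - y‖

theorem stmt5 (f : H → ℝ) (f' : H → H)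
    (hdiff : ∀ x v : H, HasDerivAt (fun t : ℝ => f (x + t • v)) ⟪f' x, v⟫ 0)
    (hmono : ∀ x y : H, 0 ≤ ⟪f' x - f' y, x - y⟫)
    (hph : ∀ x : H, ∀ t : ℝ, 0 < t → f' (t • x) = t • f' x) (x : H) :
    f x = (1 / 2) * ⟪x, f' x⟫ + f 0 := by
  have hf0 : f' 0 = 0 := by
    have h2 := hph 0 2 (by norm_num)
    rw [smul_zero, two_smul, left_eq_add] at h2
    exact h2
  set c : ℝ := ⟪f' x, x⟫ with hc
  -- derivative of s ↦ f (s • x) at each t ∈ [0,1]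
  have key : ∀ t ∈ Set.Icc (0:ℝ) 1, HasDerivAt (fun s : ℝ => f (s • x)) (t * c) t := by
    intro t ht
    have hd0 : HasDerivAt (fun s : ℝ => f (t • x + s • x)) ⟪f' (t • x), x⟫ (t - t) := by
      rw [sub_self]; exact hdiff (t • x) x
    have h1 : HasDerivAt (fun s : ℝ => s - t) 1 t := (hasDerivAt_id t).sub_const t
    have hcomp := HasDerivAt.comp (h := fun s : ℝ => s - t) t hd0 h1
    have heq : ((fun s : ℝ => f (t • x + s • x)) ∘ fun s : ℝ => s - t)
        = fun s : ℝ => f (s • x) := by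
      funext s
      simp [Function.comp, sub_smul, add_sub_cancel]
    rw [heq, mul_one] at hcomp
    have hval : ⟪f' (t • x), x⟫ = t * c := by
      rcases eq_or_lt_of_le ht.1 with h | h
      · rw [← h]; simp [hf0]
      · rw [hph x t h, real_inner_smul_left, hc]
    rwa [hval] at hcomp
  -- φ s = f (s • x) - s^2 * (c/2) has zero derivative on [0,1]
  have keyφ : ∀ t ∈ Set.Icc (0:ℝ) 1,
      HasDerivAt (fun s : ℝ => f (s • x) - s ^ 2 * (c / 2)) 0 t := by
    intro t ht
    have h2 : HasDerivAt (fun s : ℝ => s ^ 2 * (c / 2)) (t * c) t := by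
      have := (hasDerivAt_pow 2 t).mul_const (c / 2)
      exact this.congr_deriv (by push_cast; ring)
    exact ((key t ht).sub h2).congr_deriv (sub_self _)
  have hcont : ContinuousOn (fun s : ℝ => f (s • x) - s ^ 2 * (c / 2)) (Set.Icc 0 1) :=
    fun t ht => (keyφ t ht).continuousAt.continuousWithinAt
  have hderiv : ∀ t ∈ Set.Ico (0:ℝ) 1,
      HasDerivWithinAt (fun s : ℝ => f (s • x) - s ^ 2 * (c / 2)) 0 (Set.Ici t) t :=
    fun t ht => (keyφ t ⟨ht.1, ht.2.le⟩).hasDerivWithinAt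
  have := constant_of_has_deriv_right_zero hcont hderiv 1 (by norm_num)
  simp only [one_pow, one_smul, zero_pow, zero_smul, mul_one, zero_mul, sub_zero] at this
  have hcomm : ⟪x, f' x⟫ = c := real_inner_comm (f' x) x
  rw [hcomm]
  linarith
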